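/- The key identity establishing that Λ is a lift of the VSLAM kinematics: for any nonzero q ∈ ℝ³, any 3×3 special orthogonal matrix R, and any Ω, V ∈ ℝ³, setting w = (qᵀV)/‖q‖² and W = Ω + (q × V)/‖q‖², one has −w·Rq + R(Ω × q) − R(W × q) + RV = 0. -/

import Mathlib

open Matrix

/-- The Euclidean norm of a vector in `ℝ³`. -/
noncomputable def enorm3 (v : Fin 3 → ℝ) : ℝ := ‖(EuclideanSpace.equiv (Fin 3) ℝ).symm v‖

lemma enorm3_sq (v : Fin 3 → ℝ) : (enorm3 v) ^ 2 = v 0 ^ 2 + v 1 ^ 2 + v 2 ^ 2 := by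
  have := EuclideanSpace.norm_eq ((EuclideanSpace.equiv (Fin 3) ℝ).symm v)
  rw [enorm3, this, Real.sq_sqrt (by positivity)]
  simp [Fin.sum_univ_three, sq_abs]

lemma enorm3_sq_pos (v : Fin 3 → ℝ) (hv : v ≠ 0) : 0 < (enorm3 v) ^ 2 := by
  rw [enorm3_sq]
  rcases (by simpa [funext_iff, Fin.forall_fin_succ] using hv :
      ¬ (v 0 = 0 ∧ v 1 = 0 ∧ v 2 = 0)) with h
  by_contra hle
  push_neg at hle
  have h0 : v 0 = 0 := by nlinarith [sq_nonneg (v 0), sq_nonneg (v 1), sq_nonneg (v 2)]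
  have h1 : v 1 = 0 := by nlinarith [sq_nonneg (v 0), sq_nonneg (v 1), sq_nonneg (v 2)]
  have h2 : v 2 = 0 := by nlinarith [sq_nonneg (v 0), sq_nonneg (v 1), sq_nonneg (v 2)]
  exact h ⟨h0, h1, h2⟩

/-- The key identity establishing that `Λ` is a lift of the VSLAM kinematics:
for nonzero `q ∈ ℝ³`, any special orthogonal `R`, and any `Ω, V ∈ ℝ³`, setting
`w = (qᵀV)/‖q‖²` and `W = Ω + (q × V)/‖q‖²`, one has
`−w·Rq + R(Ω × q) − R(W × q) + RV = 0`. -/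
theorem lift_identity (q Ω V : Fin 3 → ℝ) (R : Matrix (Fin 3) (Fin 3) ℝ)
    (hq : q ≠ 0) (hR : Rᵀ * R = 1 ∧ R.det = 1)
    (w : ℝ) (hw : w = (q ⬝ᵥ V) / (enorm3 q) ^ 2)
    (W : Fin 3 → ℝ) (hW : W = Ω + ((enorm3 q) ^ 2)⁻¹ • (q ⨯₃ V)) :
    -(w • (R *ᵥ q)) + R *ᵥ (Ω ⨯₃ q) - R *ᵥ (W ⨯₃ q) + R *ᵥ V = 0 := by
  have hn : (enorm3 q) ^ 2 ≠ 0 := (enorm3_sq_pos q hq).ne'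
  have hns := enorm3_sq q
  subst hw hW
  funext i
  simp only [Pi.add_apply, Pi.sub_apply, Pi.neg_apply, Pi.smul_apply, Pi.zero_apply,
    Matrix.mulVec, dotProduct, crossProduct, Fin.sum_univ_three, smul_eq_mul,
    LinearMap.mk₂_apply, Matrix.cons_val_zero, Matrix.cons_val_one, Matrix.head_cons,
    Matrix.cons_val_two, Matrix.tail_cons]
  field_simp
  fin_cases i <;> · rw [hns] at hn ⊢; field_simp; ring
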